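/- For every positive integer n, the number of atomic partitions of [n] equals the number of unsplitable partitions of [n], i.e., |A_n| = |US_n|. -/

import Mathlib

/-- A block of a set partition: a finite set of positive integers. -/
abbrev Block : Type := Finset ℕ

/-- The underlying set of a list of blocks (the union of all blocks). -/
def support (P : List Block) : Finset ℕ := P.foldr (· ∪ ·) ∅

/-- `P` is a set partition of `[n] = {1,…,n}`: a list of pairwise disjoint nonempty
blocks with union `{1,…,n}`, listed in increasing order of their minimal elements. -/
def IsPartition (n : ℕ) (P : List Block) : Prop :=
  (∀ B ∈ P, B.Nonempty) ∧ List.Pairwise Disjoint P ∧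
    support P = Finset.Icc 1 n ∧
    List.Chain' (fun B C : Block => B.min < C.min) P

/-- Add `m` to every element of every block: `σ + m`. -/
def shiftUp (m : ℕ) (P : List Block) : List Block := P.map fun B => B.image (· + m)

/-- Subtract `m` from every element of every block. -/
def shiftDown (m : ℕ) (P : List Block) : List Block := P.map fun B => B.image (· - m)

/-- The slash product `π | σ` where `π` is a partition of `[m]`. -/
def slash (m : ℕ) (P Q : List Block) : List Block := P ++ shiftUp m Q

/-- `P` is an atomic partition of `[n]`: it is not a slash product of two
nonempty partitions. -/
def Atomic (n : ℕ) (P : List Block) : Prop :=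
  ¬ ∃ (a b : ℕ) (σ τ : List Block), 0 < a ∧ 0 < b ∧ a + b = n ∧
      IsPartition a σ ∧ IsPartition b τ ∧ P = slash a σ τ

/-- The split product `π ∘ σ` where `π` is a partition of `[m]`. -/
def splitProd (m : ℕ) (P Q : List Block) : List Block :=
  List.zipWith (· ∪ ·) P (shiftUp m Q) ++ P.drop Q.length ++ (shiftUp m Q).drop P.length

/-- `P` is a splitable partition of `[n]`: a split product of two nonempty partitions. -/
def Splitable (n : ℕ) (P : List Block) : Prop :=
  ∃ (a b : ℕ) (σ τ : List Block), 0 < a ∧ 0 < b ∧ a + b = n ∧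
      IsPartition a σ ∧ IsPartition b τ ∧ P = splitProd a σ τ

/-- The minimum of a block (`0` for the empty block). -/
def blockMin (B : Block) : ℕ := B.min.untopD 0

/-- The restriction `π_S`: the nonempty intersections `B ∩ S`, listed in
increasing order of their minimal elements. -/
def restrict (P : List Block) (S : Finset ℕ) : List Block :=
  (((P.map (· ∩ S)).filter fun B => decide B.Nonempty).mergeSort
    fun B C => decide (blockMin B ≤ blockMin C))

/-- The blocks from position `d` on have union equal to an upper part
`{x_t, x_{t+1}, …, x_n}` of the underlying set. -/
def IsUpperSuffix (P : List Block) (d : ℕ) : Prop :=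
  ∃ s ∈ support P, support (P.drop d) = (support P).filter (s ≤ ·)

instance (P : List Block) : DecidablePred (IsUpperSuffix P) := fun d => by
  unfold IsUpperSuffix; infer_instance

/-- `R(π)`: the longest proper-or-improper final segment `{B_r,…,B_k}` of the blocks
whose union is an upper part `{x_t,…,x_n}` of the underlying set. -/
def Rmap (P : List Block) : List Block :=
  P.drop ((((Finset.range P.length).filter fun d => IsUpperSuffix P d).max).unbotD 0)

/-- `π = π_{[i-1]} ∘ (π_{[i,n]} − i + 1)`. -/
def SplitsAt (n i : ℕ) (P : List Block) : Prop :=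
  P = splitProd (i - 1) (restrict P (Finset.Icc 1 (i - 1)))
        (shiftDown (i - 1) (restrict P (Finset.Icc i n)))

instance (n : ℕ) (P : List Block) : DecidablePred fun i => SplitsAt n i P := fun i => by
  unfold SplitsAt; infer_instance

/-- The index `i` in the definition of `φ`: the smallest element of the first block
`B_1` such that `π = π_{[i-1]} ∘ (π_{[i,n]} − i + 1)`. -/
def phiI (n : ℕ) (P : List Block) : ℕ :=
  (((P.headD ∅).filter fun i => 2 ≤ i ∧ SplitsAt n i P).min).untopD 0

/-- The index `j` in the definition of `φ`: the smallest element of the underlying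
set of `R(π_{[i,n]})`. -/
def phiJ (n : ℕ) (P : List Block) : ℕ :=
  ((support (Rmap (restrict P (Finset.Icc (phiI n P) n)))).min).untopD 0

/-- The map `φ`: `φ(π) = π_{[j-1]} | (π_{[j,n]} − j + 1)`. -/
def phi (n : ℕ) (P : List Block) : List Block :=
  slash (phiJ n P - 1) (restrict P (Finset.Icc 1 (phiJ n P - 1)))
    (shiftDown (phiJ n P - 1) (restrict P (Finset.Icc (phiJ n P) n)))

/-- `σ_{[j-1]} = σ_{[i-1]} ∘ (σ_{[i,j-1]} − i + 1)`. -/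
def SplitsAtRes (j i : ℕ) (P : List Block) : Prop :=
  restrict P (Finset.Icc 1 (j - 1)) =
    splitProd (i - 1) (restrict P (Finset.Icc 1 (i - 1)))
      (shiftDown (i - 1) (restrict P (Finset.Icc i (j - 1))))

instance (j : ℕ) (P : List Block) : DecidablePred fun i => SplitsAtRes j i P := fun i => by
  unfold SplitsAtRes; infer_instance

open scoped Classical in
/-- The map `ψ`. Here `j` is the smallest element of the underlying set of `R(σ)`,
`r` is the (0-based) position of the first block of `R(σ)`, and in the splitable case
`i` is the smallest element of `B_1` with `σ_{[j-1]} = σ_{[i-1]} ∘ (σ_{[i,j-1]} − i + 1)`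
and `q` is the (0-based) position of the first block contained in `[i-1]`. -/
noncomputable def psi (n : ℕ) (P : List Block) : List Block :=
  let j := ((support (Rmap P)).min).untopD 0
  if Splitable (j - 1) (restrict P (Finset.Icc 1 (j - 1))) then
    let i := (((P.headD ∅).filter fun i => 2 ≤ i ∧ SplitsAtRes j i P).min).untopD 0
    let q := P.findIdx fun B => decide (B ⊆ Finset.Icc 1 (i - 1))
    let r := P.length - (Rmap P).length
    P.take q ++ (List.zipWith (· ∪ ·) ((P.drop q).take (r - q)) (P.drop r)
      ++ ((P.drop q).take (r - q)).drop (P.drop r).length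
      ++ (P.drop r).drop (r - q))
  else
    splitProd (j - 1) (restrict P (Finset.Icc 1 (j - 1)))
      (shiftDown (j - 1) (restrict P (Finset.Icc j n)))

namespace CardAux

open Finset List

/-! ### Basic facts about `support` -/

lemma support_nil : support [] = ∅ := rfl

lemma support_cons (B : Block) (P : List Block) : support (B :: P) = B ∪ support P := rfl

lemma mem_support {P : List Block} {x : ℕ} : x ∈ support P ↔ ∃ B ∈ P, x ∈ B := by
  induction P with
  | nil => simp [support_nil]
  | cons B P ih => simp [support_cons, ih]

lemma support_append (P Q : List Block) : support (P ++ Q) = support P ∪ support Q := by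
  induction P with
  | nil => simp [support_nil]
  | cons B P ih => simp [support_cons, ih, Finset.union_assoc]

lemma support_shiftUp (m : ℕ) (P : List Block) :
    support (shiftUp m P) = (support P).image (· + m) := by
  induction P with
  | nil => simp [support_nil, shiftUp]
  | cons B P ih => simp [support_cons, shiftUp, Finset.image_union] at *; rw [ih]

lemma mem_support_getD {P : List Block} {x : ℕ} :
    x ∈ support P ↔ ∃ i, x ∈ P.getD i ∅ := by
  rw [mem_support]
  constructor
  · rintro ⟨B, hB, hx⟩
    obtain ⟨i, hi, rfl⟩ := List.mem_iff_getElem.1 hB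
    exact ⟨i, by rwa [List.getD_eq_getElem _ _ hi]⟩
  · rintro ⟨i, hx⟩
    rcases lt_or_ge i P.length with h | h
    · exact ⟨P[i], List.getElem_mem h, by rwa [List.getD_eq_getElem _ _ h] at hx⟩
    · rw [List.getD_eq_default _ _ h] at hx; simp at hx

/-! ### `getD` entry lemmas -/

lemma getD_ext {P Q : List Block} (hl : P.length = Q.length)
    (h : ∀ i, P.getD i ∅ = Q.getD i ∅) : P = Q := by
  refine List.ext_getElem hl fun i h1 h2 => ?_
  have := h i
  rwa [List.getD_eq_getElem _ _ h1, List.getD_eq_getElem _ _ h2] at this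

lemma shiftUp_getD (m : ℕ) (P : List Block) (i : ℕ) :
    (shiftUp m P).getD i ∅ = (P.getD i ∅).image (· + m) := by
  rcases lt_or_ge i P.length with h | h
  · rw [List.getD_eq_getElem _ _ h, List.getD_eq_getElem _ _ (by simpa [shiftUp] using h)]
    simp [shiftUp]
  · rw [List.getD_eq_default _ _ h, List.getD_eq_default _ _ (by simpa [shiftUp] using h)]
    simp

lemma length_shiftUp (m : ℕ) (P : List Block) : (shiftUp m P).length = P.length := by
  simp [shiftUp]

lemma shiftUp_shiftUp (k m : ℕ) (P : List Block) :
    shiftUp k (shiftUp m P) = shiftUp (m + k) P := by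
  simp only [shiftUp, List.map_map]
  congr 1
  funext B
  simp only [Function.comp_apply, Finset.image_image]
  congr 1
  funext x
  simp [Nat.add_assoc]

lemma shiftUp_inj {m : ℕ} {P Q : List Block} (h : shiftUp m P = shiftUp m Q) : P = Q := by
  have hadd : Function.Injective (· + m : ℕ → ℕ) := fun x y hxy => by
    simpa using Nat.add_right_cancel hxy
  exact List.map_injective_iff.2 (Finset.image_injective hadd) h

/-! ### pointU -/

def pointU : List Block → List Block → List Block
  | [], Q => Q
  | B :: P, [] => B :: P
  | B :: P, C :: Q => (B ∪ C) :: pointU P Q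

@[simp] lemma pointU_nil_left (Q : List Block) : pointU [] Q = Q := rfl

@[simp] lemma pointU_nil_right (P : List Block) : pointU P [] = P := by
  cases P <;> rfl

@[simp] lemma pointU_cons_cons (B C : Block) (P Q : List Block) :
    pointU (B :: P) (C :: Q) = (B ∪ C) :: pointU P Q := rfl

lemma length_pointU (P Q : List Block) :
    (pointU P Q).length = max P.length Q.length := by
  induction P generalizing Q with
  | nil => simp
  | cons B P ih => cases Q with
    | nil => simp
    | cons C Q => simp [ih]

lemma pointU_getD (P Q : List Block) (i : ℕ) :
    (pointU P Q).getD i ∅ = P.getD i ∅ ∪ Q.getD i ∅ := by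
  induction P generalizing Q i with
  | nil => simp
  | cons B P ih =>
    cases Q with
    | nil => simp
    | cons C Q => cases i with
      | zero => simp
      | succ i => simpa using ih Q i

lemma splitProd_eq (m : ℕ) (P Q : List Block) :
    splitProd m P Q = pointU P (shiftUp m Q) := by
  have key : ∀ (P S : List Block),
      List.zipWith (· ∪ ·) P S ++ P.drop S.length ++ S.drop P.length = pointU P S := by
    intro P
    induction P with
    | nil => intro S; simp
    | cons B P ih =>
      intro S
      cases S with
      | nil => simp
      | cons C S => simpa using ih S
  have hl : Q.length = (shiftUp m Q).length := (length_shiftUp m Q).symm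
  rw [splitProd, hl, key]

/-! ### Partition basics -/

lemma part_nil : IsPartition 0 [] := by
  refine ⟨by simp, by simp, ?_, List.isChain_nil⟩
  simp [support_nil]

lemma part_zero {P : List Block} (h : IsPartition 0 P) : P = [] := by
  cases P with
  | nil => rfl
  | cons B P =>
    exfalso
    obtain ⟨x, hx⟩ := h.1 B (by simp)
    have : x ∈ support (B :: P) := mem_support.2 ⟨B, by simp, hx⟩
    rw [h.2.2.1] at this
    simp at this

lemma block_subset {n : ℕ} {P : List Block} (h : IsPartition n P) {B : Block} (hB : B ∈ P) :
    B ⊆ Finset.Icc 1 n := fun x hx => h.2.2.1 ▸ mem_support.2 ⟨B, hB, hx⟩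

lemma getD_subset {n : ℕ} {P : List Block} (h : IsPartition n P) (i : ℕ) :
    P.getD i ∅ ⊆ Finset.Icc 1 n := by
  rcases lt_or_ge i P.length with hi | hi
  · rw [List.getD_eq_getElem _ _ hi]
    exact block_subset h (List.getElem_mem hi)
  · rw [List.getD_eq_default _ _ hi]
    simp

lemma getD_nonempty_iff {n : ℕ} {P : List Block} (h : IsPartition n P) {i : ℕ} :
    (P.getD i ∅).Nonempty ↔ i < P.length := by
  rcases lt_or_ge i P.length with hi | hi
  · rw [List.getD_eq_getElem _ _ hi]
    exact iff_of_true (h.1 _ (List.getElem_mem hi)) hi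
  · rw [List.getD_eq_default _ _ hi]
    simp; omega

lemma pairwise_getD {P : List Block} (h : List.Pairwise (fun B C : Block => _root_.Disjoint B C) P) {i j : ℕ} (hij : i ≠ j) :
    Disjoint (P.getD i ∅) (P.getD j ∅) := by
  have key : ∀ i j : ℕ, i < j → Disjoint (P.getD i ∅) (P.getD j ∅) := by
    intro i j hlt
    rcases lt_or_ge j P.length with hj | hj
    · have hi : i < P.length := hlt.trans hj
      rw [List.getD_eq_getElem _ _ hi, List.getD_eq_getElem _ _ hj]
      exact List.pairwise_iff_getElem.1 h i j hi hj hlt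
    · rw [List.getD_eq_default _ _ hj]
      exact Finset.disjoint_empty_right _
  rcases hij.lt_or_gt with hlt | hlt
  · exact key _ _ hlt
  · exact (key _ _ hlt).symm

lemma chain_getD {R : Block → Block → Prop} {P : List Block} (h : List.Chain' R P) {i : ℕ}
    (hi : i + 1 < P.length) : R (P.getD i ∅) (P.getD (i + 1) ∅) := by
  rw [List.getD_eq_getElem _ _ (by omega), List.getD_eq_getElem _ _ hi]
  exact List.isChain_iff_getElem.1 h i (by omega)

lemma chain_iff_getD {R : Block → Block → Prop} {P : List Block} :
    List.Chain' R P ↔ ∀ i, i + 1 < P.length → R (P.getD i ∅) (P.getD (i + 1) ∅) := by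
  constructor
  · exact fun h i hi => chain_getD h hi
  · intro h
    rw [List.Chain', List.isChain_iff_getElem]
    intro i hi
    have := h i (by omega)
    rwa [List.getD_eq_getElem _ _ (by omega), List.getD_eq_getElem _ _ (by omega)] at this

/-! ### Min facts -/

lemma coe_lt_min {s : Finset ℕ} {a : ℕ} (h : ∀ b ∈ s, a < b) : (a : WithTop ℕ) < s.min := by
  rcases s.eq_empty_or_nonempty with rfl | hs
  · simp
  · rw [← Finset.coe_min' hs]
    exact WithTop.coe_lt_coe.2 (h _ (s.min'_mem hs))

lemma min_le_coe {s : Finset ℕ} {a : ℕ} (h : a ∈ s) : s.min ≤ (a : WithTop ℕ) := Finset.min_le h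

lemma min_lt_min_iff {B C : Block} (hB : B.Nonempty) (hC : C.Nonempty) :
    B.min < C.min ↔ B.min' hB < C.min' hC := by
  rw [← Finset.coe_min' hB, ← Finset.coe_min' hC]
  exact_mod_cast Iff.rfl

lemma min'_image_add {B : Block} (hB : B.Nonempty) (m : ℕ) :
    (B.image (· + m)).min' (hB.image _) = B.min' hB + m :=
  Finset.min'_image (f := (· + m)) (fun x y hxy => by simpa using hxy) B _

lemma image_add_nonempty {B : Block} (hB : B.Nonempty) (m : ℕ) :
    (B.image (· + m)).Nonempty := hB.image _

/-! ### Disjointness helpers -/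

lemma disjoint_image_add {B C : Block} (h : Disjoint B C) (m : ℕ) :
    Disjoint (B.image (· + m)) (C.image (· + m)) := by
  have hadd : Function.Injective (· + m : ℕ → ℕ) := fun x y hxy => by
    simpa using Nat.add_right_cancel hxy
  rwa [Finset.disjoint_image hadd]


/-! ### More min helpers -/

lemma min_le_of_mem_le {B : Block} {x a : ℕ} (hx : x ∈ B) (hxa : x ≤ a) :
    B.min ≤ (a : WithTop ℕ) :=
  le_trans (Finset.min_le hx) (WithTop.coe_le_coe.2 hxa)

lemma min_lt_top {B : Block} (hB : B.Nonempty) : B.min < (⊤ : WithTop ℕ) := by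
  rw [← Finset.coe_min' hB]; exact WithTop.coe_lt_top _

lemma nonempty_of_min_lt {B C : Block} (h : B.min < C.min) : B.Nonempty := by
  by_contra h'
  rw [Finset.not_nonempty_iff_eq_empty] at h'
  subst h'
  simp only [Finset.min_empty] at h
  exact absurd h (not_top_lt)

lemma min_image_lt {B C : Block} (m : ℕ) (h : B.min < C.min) :
    (B.image (· + m)).min < (C.image (· + m)).min := by
  have hB := nonempty_of_min_lt h
  rcases C.eq_empty_or_nonempty with rfl | hC
  · simpa [Finset.min_empty] using min_lt_top (hB.image (· + m))
  · rw [min_lt_min_iff (hB.image _) (hC.image _), min'_image_add hB, min'_image_add hC]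
    have := (min_lt_min_iff hB hC).1 h
    omega

/-! ### Slash product lemmas -/

lemma slash_part {a b : ℕ} {σ τ : List Block} (ha : IsPartition a σ) (hb : IsPartition b τ) :
    IsPartition (a + b) (slash a σ τ) := by
  have hσsub : ∀ B ∈ σ, B ⊆ Finset.Icc 1 a := fun B hB => block_subset ha hB
  have hτsub : ∀ B ∈ τ, B ⊆ Finset.Icc 1 b := fun B hB => block_subset hb hB
  have hS : ∀ C ∈ shiftUp a τ, (∀ x ∈ C, a + 1 ≤ x ∧ x ≤ a + b) ∧ C.Nonempty := by
    intro C hC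
    obtain ⟨D, hD, rfl⟩ := List.mem_map.1 hC
    constructor
    · intro x hx
      obtain ⟨y, hy, rfl⟩ := Finset.mem_image.1 hx
      have := hτsub D hD hy
      simp only [Finset.mem_Icc] at this
      omega
    · exact (hb.1 D hD).image _
  refine ⟨?_, ?_, ?_, ?_⟩
  · intro B hB
    rcases List.mem_append.1 hB with h | h
    · exact ha.1 B h
    · exact (hS B h).2
  · rw [slash, List.pairwise_append]
    refine ⟨ha.2.1, ?_, ?_⟩
    · exact hb.2.1.map _ (fun _ _ h => disjoint_image_add h a)
    · intro B hB C hC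
      rw [Finset.disjoint_left]
      intro x hxB hxC
      have h1 := hσsub B hB hxB
      have h2 := (hS C hC).1 x hxC
      simp only [Finset.mem_Icc] at h1
      omega
  · rw [slash, support_append, support_shiftUp, ha.2.2.1, hb.2.2.1]
    ext x
    simp only [Finset.mem_union, Finset.mem_image, Finset.mem_Icc]
    constructor
    · rintro (⟨h1, h2⟩ | ⟨y, ⟨hy1, hy2⟩, rfl⟩) <;> omega
    · rintro ⟨h1, h2⟩
      rcases le_or_gt x a with h3 | h3
      · exact Or.inl ⟨h1, h3⟩
      · exact Or.inr ⟨x - a, ⟨by omega, by omega⟩, by omega⟩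
  · rw [slash, List.Chain', List.isChain_append]
    refine ⟨ha.2.2.2, ?_, ?_⟩
    · refine chain_iff_getD.2 ?_
      intro i hi
      rw [shiftUp_getD, shiftUp_getD]
      exact min_image_lt a (chain_getD hb.2.2.2 (by simpa [length_shiftUp] using hi))
    · intro B hB C hC
      have hBm : B ∈ σ := List.mem_of_mem_getLast? hB
      have hCm : C ∈ shiftUp a τ := List.mem_of_mem_head? hC
      obtain ⟨x, hx⟩ := ha.1 B hBm
      have hxa : x ≤ a := (Finset.mem_Icc.1 (hσsub B hBm hx)).2
      calc B.min ≤ (a : WithTop ℕ) := min_le_of_mem_le hx hxa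
        _ < C.min := coe_lt_min (fun y hy => by have := (hS C hCm).1 y hy; omega)

lemma slash_assoc (a b : ℕ) (σ τ ρ : List Block) :
    slash a σ (slash b τ ρ) = slash (a + b) (slash a σ τ) ρ := by
  simp only [slash]
  rw [show shiftUp a (τ ++ shiftUp b ρ) = shiftUp a τ ++ shiftUp a (shiftUp b ρ) from by
    simp [shiftUp], shiftUp_shiftUp, Nat.add_comm b a, List.append_assoc]

lemma slash_len_le {a b a' b' : ℕ} {σ τ σ' τ' : List Block}
    (ha : IsPartition a σ) (hb : IsPartition b τ) (ha' : IsPartition a' σ')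
    (hb' : IsPartition b' τ') (haa : a' ≤ a) (h : slash a σ τ = slash a' σ' τ') :
    σ'.length ≤ σ.length := by
  by_contra hlen
  push_neg at hlen
  -- entry at index σ.length, from the left representation
  have hSpos : 0 < (shiftUp a τ).length := by
    have : σ.length < (slash a σ τ).length := by
      rw [h]
      simp only [slash, List.length_append, length_shiftUp]
      have : σ.length < σ'.length := hlen
      omega
    simp only [slash, List.length_append] at this
    omega
  have hτpos : 0 < τ.length := by rwa [length_shiftUp] at hSpos
  have hleft : (slash a σ τ).getD σ.length ∅ = (shiftUp a τ).getD 0 ∅ := by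
    rw [slash, List.getD_append_right _ _ _ _ (le_refl _), Nat.sub_self]
  have hright : (slash a' σ' τ').getD σ.length ∅ = σ'.getD σ.length ∅ := by
    rw [slash, List.getD_append _ _ _ _ hlen]
  have heq : (shiftUp a τ).getD 0 ∅ = σ'.getD σ.length ∅ := by rw [← hleft, h, hright]
  obtain ⟨x, hx⟩ : ((shiftUp a τ).getD 0 ∅).Nonempty := by
    rw [shiftUp_getD]
    exact ((getD_nonempty_iff hb).2 hτpos).image _
  have hxa : a + 1 ≤ x := by
    rw [shiftUp_getD] at hx
    obtain ⟨y, hy, rfl⟩ := Finset.mem_image.1 hx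
    have := Finset.mem_Icc.1 (getD_subset hb 0 hy)
    omega
  have hxa' : x ≤ a' := by
    rw [heq] at hx
    exact (Finset.mem_Icc.1 (getD_subset ha' σ.length hx)).2
  omega

lemma slash_inj {a b b' : ℕ} {σ τ σ' τ' : List Block}
    (ha : IsPartition a σ) (hb : IsPartition b τ) (ha' : IsPartition a σ')
    (hb' : IsPartition b' τ') (h : slash a σ τ = slash a σ' τ') :
    σ = σ' ∧ τ = τ' := by
  have h1 : σ'.length ≤ σ.length := slash_len_le ha hb ha' hb' (le_refl a) h
  have h2 : σ.length ≤ σ'.length := slash_len_le ha' hb' ha hb (le_refl a) h.symm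
  obtain ⟨hσ, hS⟩ := List.append_inj h (le_antisymm h2 h1)
  exact ⟨hσ, shiftUp_inj hS⟩

lemma slash_restrict {a a' b b' : ℕ} {σ τ σ' τ' : List Block}
    (ha : IsPartition a σ) (hb : IsPartition b τ) (ha' : IsPartition a' σ')
    (hb' : IsPartition b' τ') (hlt : a' < a)
    (h : slash a σ τ = slash a' σ' τ') :
    ∃ μ, IsPartition (a - a') μ ∧ σ = slash a' σ' μ := by
  have hle : σ'.length ≤ σ.length := slash_len_le ha hb ha' hb' (le_of_lt hlt) h
  set k := σ.length - σ'.length with hk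
  refine ⟨τ'.take k, ?_, ?_⟩
  case refine_2 =>
    have h1 : (slash a σ τ).take σ.length = σ := by
      rw [slash, List.take_left]
    rw [h, slash, List.take_append,
      List.take_of_length_le hle, shiftUp, ← List.map_take] at h1
    rw [slash, ← h1, shiftUp]
  case refine_1 =>
    have hμsub : ∀ B ∈ τ'.take k, B ∈ τ' := fun B hB => List.mem_of_mem_take hB
    have hσeq : σ = σ' ++ shiftUp a' (τ'.take k) := by
      have h1 : (slash a σ τ).take σ.length = σ := by
        rw [slash, List.take_left]
      rw [h, slash, List.take_append,
        List.take_of_length_le hle, shiftUp, ← List.map_take] at h1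
      rw [← h1, shiftUp]
    have hsupp : Finset.Icc 1 a = Finset.Icc 1 a' ∪ (support (τ'.take k)).image (· + a') := by
      rw [← ha.2.2.1, ← ha'.2.2.1, hσeq, support_append, support_shiftUp]
    have hμ1 : ∀ x ∈ support (τ'.take k), 1 ≤ x := by
      intro x hx
      obtain ⟨B, hB, hxB⟩ := mem_support.1 hx
      have : x ∈ support τ' := mem_support.2 ⟨B, hμsub B hB, hxB⟩
      rw [hb'.2.2.1] at this
      exact (Finset.mem_Icc.1 this).1
    refine ⟨?_, ?_, ?_, ?_⟩
    · exact fun B hB => hb'.1 B (hμsub B hB)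
    · exact hb'.2.1.sublist (List.take_sublist k τ')
    · ext x
      simp only [Finset.mem_Icc]
      constructor
      · intro hx
        have h1 : x + a' ∈ Finset.Icc 1 a := by
          rw [hsupp]
          exact Finset.mem_union_right _ (Finset.mem_image.2 ⟨x, hx, rfl⟩)
        have := Finset.mem_Icc.1 h1
        have := hμ1 x hx
        omega
      · intro hx
        have h1 : x + a' ∈ Finset.Icc 1 a := by
          rw [Finset.mem_Icc]; omega
        rw [hsupp, Finset.mem_union] at h1
        rcases h1 with h1 | h1
        · rw [Finset.mem_Icc] at h1; omega
        · obtain ⟨y, hy, hyx⟩ := Finset.mem_image.1 h1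
          have : y = x := by omega
          rwa [← this]
    · exact hb'.2.2.2.take k

/-! ### Split product lemmas -/

lemma union_nonempty {s t : Finset ℕ} : (s ∪ t).Nonempty ↔ s.Nonempty ∨ t.Nonempty := by
  constructor
  · rintro ⟨x, hx⟩
    rcases Finset.mem_union.1 hx with h | h
    exacts [Or.inl ⟨x, h⟩, Or.inr ⟨x, h⟩]
  · rintro (⟨x, hx⟩ | ⟨x, hx⟩)
    exacts [⟨x, Finset.mem_union_left _ hx⟩, ⟨x, Finset.mem_union_right _ hx⟩]

lemma union_inter_low {X Y : Block} {a : ℕ} (hX : X ⊆ Finset.Icc 1 a)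
    (hY : ∀ y ∈ Y, a < y) : (X ∪ Y) ∩ Finset.Icc 1 a = X := by
  ext x
  simp only [Finset.mem_inter, Finset.mem_union]
  constructor
  · rintro ⟨hx | hx, hxa⟩
    · exact hx
    · have := hY x hx
      rw [Finset.mem_Icc] at hxa
      omega
  · intro hx
    exact ⟨Or.inl hx, hX hx⟩

lemma support_pointU (P Q : List Block) :
    support (pointU P Q) = support P ∪ support Q := by
  ext x
  simp only [Finset.mem_union, mem_support_getD, pointU_getD, Finset.mem_union]
  constructor
  · rintro ⟨i, hx | hx⟩
    exacts [Or.inl ⟨i, hx⟩, Or.inr ⟨i, hx⟩]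
  · rintro (⟨i, hx⟩ | ⟨i, hx⟩)
    exacts [⟨i, Or.inl hx⟩, ⟨i, Or.inr hx⟩]

lemma shiftUp_pointU (m : ℕ) (P Q : List Block) :
    shiftUp m (pointU P Q) = pointU (shiftUp m P) (shiftUp m Q) := by
  apply getD_ext
  · simp [length_shiftUp, length_pointU]
  · intro i
    rw [shiftUp_getD, pointU_getD, pointU_getD, shiftUp_getD, shiftUp_getD,
      Finset.image_union]

lemma pointU_assoc (P Q R : List Block) :
    pointU (pointU P Q) R = pointU P (pointU Q R) := by
  apply getD_ext
  · simp only [length_pointU]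
    omega
  · intro i
    simp only [pointU_getD, Finset.union_assoc]

lemma splitProd_assoc (a b : ℕ) (σ τ ρ : List Block) :
    splitProd a σ (splitProd b τ ρ) = splitProd (a + b) (splitProd a σ τ) ρ := by
  rw [splitProd_eq, splitProd_eq, splitProd_eq, splitProd_eq, shiftUp_pointU,
    shiftUp_shiftUp, Nat.add_comm b a, pointU_assoc]

lemma splitProd_part {a b : ℕ} {σ τ : List Block} (ha : IsPartition a σ)
    (hb : IsPartition b τ) : IsPartition (a + b) (splitProd a σ τ) := by
  rw [splitProd_eq]
  have hSsub : ∀ i, ∀ x ∈ (shiftUp a τ).getD i ∅, a + 1 ≤ x ∧ x ≤ a + b := by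
    intro i x hx
    rw [shiftUp_getD] at hx
    obtain ⟨y, hy, rfl⟩ := Finset.mem_image.1 hx
    have := Finset.mem_Icc.1 (getD_subset hb i hy)
    omega
  have hSnonempty : ∀ i, ((shiftUp a τ).getD i ∅).Nonempty ↔ i < τ.length := by
    intro i
    rw [shiftUp_getD, Finset.image_nonempty]
    exact getD_nonempty_iff hb
  have hSpair : List.Pairwise (fun B C : Block => _root_.Disjoint B C) (shiftUp a τ) :=
    hb.2.1.map _ (fun _ _ h => disjoint_image_add h a)
  have hSchain : ∀ i, i + 1 < τ.length →
      ((shiftUp a τ).getD i ∅).min < ((shiftUp a τ).getD (i + 1) ∅).min := by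
    intro i hi
    rw [shiftUp_getD, shiftUp_getD]
    exact min_image_lt a (chain_getD hb.2.2.2 hi)
  have hσle : ∀ i, i < σ.length → (σ.getD i ∅).min ≤ (a : WithTop ℕ) := by
    intro i hi
    obtain ⟨x, hx⟩ := (getD_nonempty_iff ha).2 hi
    exact min_le_of_mem_le hx (Finset.mem_Icc.1 (getD_subset ha i hx)).2
  have hSgt : ∀ i, (a : WithTop ℕ) < ((shiftUp a τ).getD i ∅).min :=
    fun i => coe_lt_min (fun y hy => by have := hSsub i y hy; omega)
  refine ⟨?_, ?_, ?_, ?_⟩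
  · intro B hB
    obtain ⟨i, hi, rfl⟩ := List.mem_iff_getElem.1 hB
    rw [← List.getD_eq_getElem _ ∅ hi, pointU_getD, union_nonempty]
    rw [length_pointU, length_shiftUp] at hi
    rcases lt_or_ge i σ.length with h1 | h1
    · exact Or.inl ((getD_nonempty_iff ha).2 h1)
    · exact Or.inr ((hSnonempty i).2 (by omega))
  · rw [List.pairwise_iff_getElem]
    intro i j hi hj hij
    rw [← List.getD_eq_getElem _ ∅ hi, ← List.getD_eq_getElem _ ∅ hj,
      pointU_getD, pointU_getD]
    rw [Finset.disjoint_left]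
    intro x hx hx'
    rcases Finset.mem_union.1 hx with h1 | h1 <;> rcases Finset.mem_union.1 hx' with h2 | h2
    · exact Finset.disjoint_left.1 (pairwise_getD ha.2.1 (Nat.ne_of_lt hij)) h1 h2
    · have := Finset.mem_Icc.1 (getD_subset ha i h1)
      have := hSsub j x h2
      omega
    · have := Finset.mem_Icc.1 (getD_subset ha j h2)
      have := hSsub i x h1
      omega
    · exact Finset.disjoint_left.1 (pairwise_getD hSpair (Nat.ne_of_lt hij)) h1 h2
  · rw [support_pointU, support_shiftUp, ha.2.2.1, hb.2.2.1]
    ext x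
    simp only [Finset.mem_union, Finset.mem_image, Finset.mem_Icc]
    constructor
    · rintro (⟨h1, h2⟩ | ⟨y, ⟨hy1, hy2⟩, rfl⟩) <;> omega
    · rintro ⟨h1, h2⟩
      rcases le_or_gt x a with h3 | h3
      · exact Or.inl ⟨h1, h3⟩
      · exact Or.inr ⟨x - a, ⟨by omega, by omega⟩, by omega⟩
  · rw [chain_iff_getD]
    intro i hi
    rw [length_pointU, length_shiftUp] at hi
    rw [pointU_getD, pointU_getD, Finset.min_union, Finset.min_union, lt_inf_iff]
    constructor
    · -- _ < (σ (i+1)).min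
      rcases lt_or_ge (i + 1) σ.length with h1 | h1
      · rw [inf_lt_iff]
        exact Or.inl (chain_getD ha.2.2.2 h1)
      · -- σ (i+1) is empty, min = ⊤
        have hemp : σ.getD (i + 1) ∅ = ∅ := List.getD_eq_default _ _ h1
        rw [hemp, Finset.min_empty, inf_lt_iff]
        rcases lt_or_ge i σ.length with h2 | h2
        · exact Or.inl (lt_of_le_of_lt (hσle i h2) (WithTop.coe_lt_top a))
        · have h3 : i + 1 < τ.length := by omega
          exact Or.inr (min_lt_top ((hSnonempty i).2 (by omega)))
    · rcases lt_or_ge (i + 1) τ.length with h1 | h1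
      · rcases lt_or_ge i σ.length with h2 | h2
        · rw [inf_lt_iff]
          exact Or.inl (lt_of_le_of_lt (hσle i h2) (hSgt (i + 1)))
        · have h3 : i + 1 < τ.length := h1
          rw [inf_lt_iff]
          exact Or.inr (hSchain i (by omega))
      · have hemp : (shiftUp a τ).getD (i + 1) ∅ = ∅ :=
          List.getD_eq_default _ _ (by rwa [length_shiftUp])
        rw [hemp, Finset.min_empty, inf_lt_iff]
        rcases lt_or_ge i σ.length with h2 | h2
        · exact Or.inl (lt_of_le_of_lt (hσle i h2) (WithTop.coe_lt_top a))
        · exact Or.inr (min_lt_top ((hSnonempty i).2 (by omega)))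

lemma union_filter_high {X Y : Block} {a : ℕ} (hX : X ⊆ Finset.Icc 1 a)
    (hY : ∀ y ∈ Y, a < y) : (X ∪ Y).filter (fun x => a + 1 ≤ x) = Y := by
  ext x
  simp only [Finset.mem_filter, Finset.mem_union]
  constructor
  · rintro ⟨hx | hx, hxa⟩
    · have := Finset.mem_Icc.1 (hX hx)
      omega
    · exact hx
  · intro hx
    exact ⟨Or.inr hx, by have := hY x hx; omega⟩

lemma splitProd_inj {a b b' : ℕ} {σ τ σ' τ' : List Block}
    (ha : IsPartition a σ) (hb : IsPartition b τ) (ha' : IsPartition a σ')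
    (hb' : IsPartition b' τ') (h : splitProd a σ τ = splitProd a σ' τ') :
    σ = σ' ∧ τ = τ' := by
  rw [splitProd_eq, splitProd_eq] at h
  have hent : ∀ i, σ.getD i ∅ ∪ (shiftUp a τ).getD i ∅ =
      σ'.getD i ∅ ∪ (shiftUp a τ').getD i ∅ := fun i => by
    rw [← pointU_getD, ← pointU_getD, h]
  have hYb : ∀ (c : ℕ) (ρ : List Block), IsPartition c ρ → ∀ i,
      ∀ y ∈ (shiftUp a ρ).getD i ∅, a < y := by
    intro c ρ hρ i y hy
    rw [shiftUp_getD] at hy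
    obtain ⟨z, hz, rfl⟩ := Finset.mem_image.1 hy
    have := Finset.mem_Icc.1 (getD_subset hρ i hz)
    omega
  have hσ : ∀ i, σ.getD i ∅ = σ'.getD i ∅ := by
    intro i
    have h1 := congrArg (· ∩ Finset.Icc 1 a) (hent i)
    rwa [union_inter_low (getD_subset ha i) (hYb b τ hb i),
      union_inter_low (getD_subset ha' i) (hYb b' τ' hb' i)] at h1
  have hS : ∀ i, (shiftUp a τ).getD i ∅ = (shiftUp a τ').getD i ∅ := by
    intro i
    have h1 := congrArg (Finset.filter (fun x => a + 1 ≤ x)) (hent i)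
    rwa [union_filter_high (getD_subset ha i) (hYb b τ hb i),
      union_filter_high (getD_subset ha' i) (hYb b' τ' hb' i)] at h1
  have hlen : σ.length = σ'.length := by
    rcases Nat.lt_trichotomy σ.length σ'.length with h1 | h1 | h1
    · have := (getD_nonempty_iff ha').2 h1
      rw [← hσ] at this
      have := (getD_nonempty_iff ha).1 this
      omega
    · exact h1
    · have := (getD_nonempty_iff ha).2 h1
      rw [hσ] at this
      have := (getD_nonempty_iff ha').1 this
      omega
  have hτnonempty : ∀ (c : ℕ) (ρ : List Block), IsPartition c ρ → ∀ i,
      (((shiftUp a ρ).getD i ∅).Nonempty ↔ i < ρ.length) := by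
    intro c ρ hρ i
    rw [shiftUp_getD, Finset.image_nonempty]
    exact getD_nonempty_iff hρ
  have hlenτ : τ.length = τ'.length := by
    rcases Nat.lt_trichotomy τ.length τ'.length with h1 | h1 | h1
    · have := (hτnonempty b' τ' hb' τ.length).2 h1
      rw [← hS] at this
      have := (hτnonempty b τ hb τ.length).1 this
      omega
    · exact h1
    · have := (hτnonempty b τ hb τ'.length).2 h1
      rw [hS] at this
      have := (hτnonempty b' τ' hb' τ'.length).1 this
      omega
  refine ⟨getD_ext hlen hσ, shiftUp_inj (m := a) (getD_ext ?_ hS)⟩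
  simp [length_shiftUp, hlenτ]

lemma splitProd_restrict {a a' b b' : ℕ} {σ τ σ' τ' : List Block}
    (ha : IsPartition a σ) (hb : IsPartition b τ) (ha' : IsPartition a' σ')
    (hb' : IsPartition b' τ') (hlt : a' < a) (hsum : a + b = a' + b')
    (h : splitProd a σ τ = splitProd a' σ' τ') :
    ∃ μ, IsPartition (a - a') μ ∧ σ = splitProd a' σ' μ := by
  classical
  rw [splitProd_eq, splitProd_eq] at h
  set c := a - a' with hc
  have hent : ∀ i, σ.getD i ∅ ∪ ((τ.getD i ∅).image (· + a)) =
      σ'.getD i ∅ ∪ ((τ'.getD i ∅).image (· + a')) := fun i => by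
    rw [← shiftUp_getD, ← shiftUp_getD, ← pointU_getD, ← pointU_getD, h]
  set d : ℕ → Block := fun i => (τ'.getD i ∅) ∩ Finset.Icc 1 c with hd
  -- key entry identity
  have hkey : ∀ i, σ.getD i ∅ = σ'.getD i ∅ ∪ (d i).image (· + a') := by
    intro i
    have h1 := congrArg (· ∩ Finset.Icc 1 a) (hent i)
    have hL : (σ.getD i ∅ ∪ (τ.getD i ∅).image (· + a)) ∩ Finset.Icc 1 a = σ.getD i ∅ := by
      refine union_inter_low (getD_subset ha i) ?_
      intro y hy
      obtain ⟨z, hz, rfl⟩ := Finset.mem_image.1 hy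
      have := Finset.mem_Icc.1 (getD_subset hb i hz)
      omega
    have hR : (σ'.getD i ∅ ∪ (τ'.getD i ∅).image (· + a')) ∩ Finset.Icc 1 a =
        σ'.getD i ∅ ∪ (d i).image (· + a') := by
      ext x
      simp only [Finset.mem_inter, Finset.mem_union, Finset.mem_image, Finset.mem_Icc, hd,
        Finset.mem_inter, Finset.mem_Icc]
      constructor
      · rintro ⟨hx | ⟨y, hy, rfl⟩, hxa⟩
        · exact Or.inl hx
        · have h2 := Finset.mem_Icc.1 (getD_subset hb' i hy)
          exact Or.inr ⟨y, ⟨hy, by omega⟩, rfl⟩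
      · rintro (hx | ⟨y, ⟨hy, hy2⟩, rfl⟩)
        · have h2 := Finset.mem_Icc.1 (getD_subset ha' i hx)
          exact ⟨Or.inl hx, by omega⟩
        · exact ⟨Or.inr ⟨y, hy, rfl⟩, by omega⟩
    rw [hL, hR] at h1
    exact h1
  -- d vanishes from some point on
  haveI : IsTrans Block (fun B C : Block => B.min < C.min) := ⟨fun _ _ _ => lt_trans⟩
  have hpw : List.Pairwise (fun B C : Block => B.min < C.min) τ' :=
    List.isChain_iff_pairwise.1 hb'.2.2.2
  have hdmono : ∀ i j, i ≤ j → d i = ∅ → d j = ∅ := by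
    intro i j hij hi
    rcases Nat.eq_or_lt_of_le hij with rfl | hij'
    · exact hi
    by_contra hj
    rw [← Ne, ← Finset.nonempty_iff_ne_empty] at hj
    obtain ⟨x, hx⟩ := hj
    rw [hd] at hx
    simp only [Finset.mem_inter, Finset.mem_Icc] at hx
    have hjlen : j < τ'.length := by
      by_contra hjl
      push_neg at hjl
      rw [List.getD_eq_default _ _ hjl] at hx
      simp at hx
    have hilen : i < τ'.length := lt_trans hij' hjlen
    -- min of τ'_i is > c since d i = ∅
    have hmin : (c : WithTop ℕ) < (τ'.getD i ∅).min := by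
      refine coe_lt_min ?_
      intro y hy
      by_contra hyc
      push_neg at hyc
      have hy1 : 1 ≤ y := (Finset.mem_Icc.1 (getD_subset hb' i hy)).1
      have : y ∈ d i := by
        rw [hd]
        simp only [Finset.mem_inter, Finset.mem_Icc]
        exact ⟨hy, hy1, hyc⟩
      rw [hi] at this
      simp at this
    have hminlt : (τ'.getD i ∅).min < (τ'.getD j ∅).min := by
      rw [List.getD_eq_getElem _ _ hilen, List.getD_eq_getElem _ _ hjlen]
      exact List.pairwise_iff_getElem.1 hpw i j hilen hjlen hij'
    have hxmin : (τ'.getD j ∅).min ≤ (x : WithTop ℕ) := Finset.min_le hx.1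
    have hxc : (x : WithTop ℕ) ≤ (c : WithTop ℕ) := by exact_mod_cast hx.2.2
    exact lt_irrefl _ (lt_of_lt_of_le (lt_of_lt_of_le (lt_trans hmin hminlt) hxmin) hxc)
  have hex : ∃ i, d i = ∅ := by
    refine ⟨τ'.length, ?_⟩
    rw [hd]
    simp [List.getD_eq_default _ _ (le_refl τ'.length)]
  set l := Nat.find hex with hl
  have hdpos : ∀ i, i < l ↔ (d i).Nonempty := by
    intro i
    constructor
    · intro hi
      rw [Finset.nonempty_iff_ne_empty]
      exact Nat.find_min hex hi
    · intro hne
      by_contra hil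
      push_neg at hil
      have := hdmono l i hil (Nat.find_spec hex)
      rw [this] at hne
      simp at hne
  have hlle : l ≤ τ'.length := by
    by_contra hll
    push_neg at hll
    have := (hdpos τ'.length).1 hll
    rw [hd] at this
    simp [List.getD_eq_default _ _ (le_refl τ'.length)] at this
  set μ := (List.range l).map d with hμ
  have hμlen : μ.length = l := by simp [hμ]
  have hμgetD : ∀ i, μ.getD i ∅ = if i < l then d i else ∅ := by
    intro i
    rcases lt_or_ge i l with hi | hi
    · rw [List.getD_eq_getElem _ _ (by simp [hμ]; omega), if_pos hi]
      simp [hμ]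
    · rw [List.getD_eq_default _ _ (by simp [hμ]; omega), if_neg (by omega)]
  have hdempty : ∀ i, l ≤ i → d i = ∅ := fun i hi => hdmono l i hi (Nat.find_spec hex)
  -- the σ entries
  have hσchar : ∀ i, (i < σ.length ↔ (i < σ'.length ∨ i < l)) := by
    intro i
    rw [← getD_nonempty_iff ha (i := i), hkey i, union_nonempty, Finset.image_nonempty,
      getD_nonempty_iff ha', ← hdpos i]
  have hμpart : IsPartition c μ := by
    refine ⟨?_, ?_, ?_, ?_⟩
    · intro B hB
      obtain ⟨i, hi, rfl⟩ := List.mem_map.1 hB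
      rw [List.mem_range] at hi
      exact (hdpos i).1 hi
    · rw [List.pairwise_iff_getElem]
      intro i j hi hj hij
      simp only [hμ, List.getElem_map, List.getElem_range] at *
      rw [List.length_map, List.length_range] at hi hj
      refine Finset.disjoint_left.2 fun x hx hx' => ?_
      have h1 : x ∈ τ'.getD i ∅ := (Finset.mem_inter.1 hx).1
      have h2 : x ∈ τ'.getD j ∅ := (Finset.mem_inter.1 hx').1
      exact Finset.disjoint_left.1 (pairwise_getD hb'.2.1 (Nat.ne_of_lt hij)) h1 h2
    · ext x
      constructor
      · intro hx
        obtain ⟨i, hxi⟩ := mem_support_getD.1 hx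
        rw [hμgetD] at hxi
        split_ifs at hxi with hil
        · rw [hd] at hxi
          exact (Finset.mem_inter.1 hxi).2
        · simp at hxi
      · intro hx
        have hx' := Finset.mem_Icc.1 hx
        have hcb' : c ≤ b' := by omega
        have hxτ' : x ∈ support τ' := by
          rw [hb'.2.2.1, Finset.mem_Icc]
          omega
        obtain ⟨i, hxi⟩ := mem_support_getD.1 hxτ'
        have hxd : x ∈ d i := by
          rw [hd]
          exact Finset.mem_inter.2 ⟨hxi, hx⟩
        have hil : i < l := (hdpos i).2 ⟨x, hxd⟩
        refine mem_support_getD.2 ⟨i, ?_⟩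
        rw [hμgetD, if_pos hil]
        exact hxd
    · rw [chain_iff_getD]
      intro i hi
      rw [hμlen] at hi
      rw [hμgetD, hμgetD, if_pos (by omega), if_pos hi]
      -- mins of d agree with mins of τ'
      have hmineq : ∀ j, j < l → (d j).min = (τ'.getD j ∅).min := by
        intro j hj
        have hdj : (d j).Nonempty := (hdpos j).1 hj
        have hjτ : (τ'.getD j ∅).Nonempty := by
          obtain ⟨x, hx⟩ := hdj
          exact ⟨x, (Finset.mem_inter.1 hx).1⟩
        refine le_antisymm ?_ ?_
        · -- (d j).min ≤ τ'_j.min : the min of τ'_j belongs to d j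
          obtain ⟨x, hx⟩ := hdj
          have hm := Finset.min'_mem _ hjτ
          have hmem : (τ'.getD j ∅).min' hjτ ∈ d j := by
            rw [hd]
            refine Finset.mem_inter.2 ⟨hm, ?_⟩
            rw [Finset.mem_Icc]
            have h1 := (Finset.mem_Icc.1 (getD_subset hb' j hm)).1
            have h2 : (τ'.getD j ∅).min' hjτ ≤ x := Finset.min'_le _ _ (Finset.mem_inter.1 hx).1
            have h3 := (Finset.mem_Icc.1 ((Finset.mem_inter.1 hx).2)).2
            exact ⟨h1, by omega⟩
          calc (d j).min ≤ _ := Finset.min_le hmem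
            _ = (τ'.getD j ∅).min := Finset.coe_min' hjτ
        · exact Finset.le_min fun x hx => Finset.min_le (Finset.mem_inter.1 hx).1
      rw [hmineq i (by omega), hmineq (i + 1) hi]
      exact chain_getD hb'.2.2.2 (by omega)
  refine ⟨μ, hμpart, ?_⟩
  rw [splitProd_eq]
  apply getD_ext
  · rw [length_pointU, length_shiftUp, hμlen]
    have h1 := hσchar σ.length
    have h2 := hσchar (max σ'.length l)
    omega
  · intro i
    rw [pointU_getD, shiftUp_getD, hkey i, hμgetD]
    split_ifs with hil
    · rfl
    · rw [hdempty i (by omega)]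
/-! ### Finiteness -/

lemma length_le_card_support : ∀ {P : List Block}, (∀ B ∈ P, B.Nonempty) →
    List.Pairwise (fun B C : Block => _root_.Disjoint B C) P →
    P.length ≤ (support P).card := by
  intro P
  induction P with
  | nil => simp
  | cons B P ih =>
    intro h1 h2
    rw [support_cons]
    have hd : _root_.Disjoint B (support P) := by
      rw [Finset.disjoint_left]
      intro x hx hx'
      obtain ⟨C, hC, hxC⟩ := mem_support.1 hx'
      exact Finset.disjoint_left.1 ((List.pairwise_cons.1 h2).1 C hC) hx hxC
    rw [Finset.card_union_of_disjoint hd]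
    have hB : 1 ≤ B.card := Finset.card_pos.2 (h1 B (by simp))
    have := ih (fun C hC => h1 C (by simp [hC])) (List.pairwise_cons.1 h2).2
    simp only [List.length_cons]
    omega

lemma part_length_le {n : ℕ} {P : List Block} (h : IsPartition n P) : P.length ≤ n := by
  have := length_le_card_support h.1 h.2.1
  rwa [h.2.2.1, Nat.card_Icc, (by omega : n + 1 - 1 = n)] at this

lemma finite_partS (n : ℕ) : {P : List Block | IsPartition n P}.Finite := by
  classical
  have hfin : {l : List {B : Block // B ∈ (Finset.Icc 1 n).powerset} | l.length ≤ n}.Finite :=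
    List.finite_length_le _ n
  have himg := hfin.image (fun l => l.map Subtype.val)
  refine himg.subset ?_
  intro P hP
  simp only [Set.mem_image, Set.mem_setOf_eq]
  refine ⟨P.attach.map (fun B => ⟨B.val,
    Finset.mem_powerset.2 (block_subset hP B.property)⟩), ?_, ?_⟩
  · simpa using part_length_le hP
  · rw [List.map_map]
    simpa using List.attach_map_subtype_val P

/-! ### The decomposition recurrence -/

def Decomp (Op : ℕ → List Block → List Block → List Block) (n : ℕ) (P : List Block) : Prop :=
  ∃ (a b : ℕ) (σ τ : List Block), 0 < a ∧ 0 < b ∧ a + b = n ∧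
      IsPartition a σ ∧ IsPartition b τ ∧ P = Op a σ τ

lemma rec_count (Op : ℕ → List Block → List Block → List Block)
    (h0 : ∀ a σ, Op a σ [] = σ)
    (h1 : ∀ a b (σ τ : List Block), IsPartition a σ → IsPartition b τ →
      IsPartition (a + b) (Op a σ τ))
    (h2 : ∀ a b b' (σ τ σ' τ' : List Block), IsPartition a σ → IsPartition b τ →
      IsPartition a σ' → IsPartition b' τ' → Op a σ τ = Op a σ' τ' → σ = σ' ∧ τ = τ')
    (h3 : ∀ a b (σ τ ρ : List Block), Op a σ (Op b τ ρ) = Op (a + b) (Op a σ τ) ρ)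
    (h4 : ∀ a a' b b' (σ τ σ' τ' : List Block), IsPartition a σ → IsPartition b τ →
      IsPartition a' σ' → IsPartition b' τ' → a' < a → a + b = a' + b' →
      Op a σ τ = Op a' σ' τ' → ∃ μ, IsPartition (a - a') μ ∧ σ = Op a' σ' μ)
    (n : ℕ) (hn : 0 < n) :
    {P : List Block | IsPartition n P}.ncard =
      ∑ a ∈ Finset.Icc 1 n,
        {P : List Block | IsPartition a P ∧ ¬ Decomp Op a P}.ncard *
          {P : List Block | IsPartition (n - a) P}.ncard := by
  classical
  let F : ((a : (Finset.Icc 1 n : Finset ℕ)) ×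
      ({P : List Block // IsPartition (a : ℕ) P ∧ ¬ Decomp Op (a : ℕ) P} ×
        {P : List Block // IsPartition (n - (a : ℕ)) P})) →
      {P : List Block // IsPartition n P} :=
    fun x => ⟨Op (x.1 : ℕ) x.2.1.val x.2.2.val, by
      have hmem := Finset.mem_Icc.1 x.1.property
      have := h1 _ _ _ _ x.2.1.property.1 x.2.2.property
      rwa [Nat.add_sub_cancel' hmem.2] at this⟩
  have hbij : Function.Bijective F := by
    constructor
    · rintro ⟨⟨a, haI⟩, ⟨σ, hσ⟩, ⟨τ, hτ⟩⟩ ⟨⟨a', haI'⟩, ⟨σ', hσ'⟩, ⟨τ', hτ'⟩⟩ hxy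
      have hxy' : Op a σ τ = Op a' σ' τ' := congrArg Subtype.val hxy
      have hb1 := Finset.mem_Icc.1 haI
      have hb2 := Finset.mem_Icc.1 haI'
      have haa : a = a' := by
        by_contra hne
        rcases Nat.lt_or_ge a a' with hlt | hge
        · obtain ⟨μ, hμ, hdec⟩ := h4 a' a (n - a') (n - a) σ' τ' σ τ hσ'.1 hτ' hσ.1 hτ
            hlt (by omega) hxy'.symm
          exact (show ¬ Decomp Op a' σ' from hσ'.2)
            ⟨a, a' - a, σ, μ, by omega, by omega, by omega, hσ.1, hμ, hdec⟩
        · have hlt : a' < a := by omega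
          obtain ⟨μ, hμ, hdec⟩ := h4 a a' (n - a) (n - a') σ τ σ' τ' hσ.1 hτ hσ'.1 hτ'
            hlt (by omega) hxy'
          exact (show ¬ Decomp Op a σ from hσ.2)
            ⟨a', a - a', σ', μ, by omega, by omega, by omega, hσ'.1, hμ, hdec⟩
      subst haa
      obtain ⟨hσe, hτe⟩ := h2 a (n - a) (n - a) σ τ σ' τ' hσ.1 hτ hσ'.1 hτ' hxy'
      subst hσe
      subst hτe
      rfl
    · rintro ⟨P, hP⟩
      have hexists : ∃ a, 0 < a ∧ a ≤ n ∧ ∃ σ τ, IsPartition a σ ∧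
          IsPartition (n - a) τ ∧ P = Op a σ τ :=
        ⟨n, hn, le_refl n, P, [], hP, by rw [Nat.sub_self]; exact part_nil, (h0 n P).symm⟩
      obtain ⟨ha0, han, σ, τ, hσ, hτ, hPeq⟩ := Nat.find_spec hexists
      set a := Nat.find hexists with ha
      have hirr : ¬ Decomp Op a σ := by
        rintro ⟨c, dd, ρ, ν, hc, hd, hcd, hρ, hν, hσeq⟩
        have hνττ : IsPartition (dd + (n - a)) (Op dd ν τ) := h1 _ _ _ _ hν hτ
        have hPc : P = Op c ρ (Op dd ν τ) := by rw [hPeq, hσeq, h3, hcd]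
        have hQ : 0 < c ∧ c ≤ n ∧ ∃ σ τ, IsPartition c σ ∧ IsPartition (n - c) τ ∧
            P = Op c σ τ :=
          ⟨hc, by omega, ρ, Op dd ν τ, hρ, by rwa [(by omega : n - c = dd + (n - a))], hPc⟩
        exact Nat.find_min hexists (show c < a by omega) hQ
      exact ⟨⟨⟨a, Finset.mem_Icc.2 ⟨ha0, han⟩⟩, ⟨σ, hσ, hirr⟩, ⟨τ, hτ⟩⟩,
        Subtype.ext hPeq.symm⟩
  have hcard := Nat.card_eq_of_bijective F hbij
  letI iPart : ∀ m : ℕ, Fintype {P : List Block // IsPartition m P} :=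
    fun m => (finite_partS m).fintype
  letI iIrr : ∀ m : ℕ, Fintype {P : List Block // IsPartition m P ∧ ¬ Decomp Op m P} :=
    fun m => (((finite_partS m).subset fun P hP => hP.1).fintype :
      Fintype ↥{P : List Block | IsPartition m P ∧ ¬ Decomp Op m P})
  have e2 : ∀ a : (Finset.Icc 1 n : Finset ℕ),
      Fintype.card ({P : List Block // IsPartition (a : ℕ) P ∧ ¬ Decomp Op (a : ℕ) P} ×
        {P : List Block // IsPartition (n - (a : ℕ)) P}) =
      {P : List Block | IsPartition (a : ℕ) P ∧ ¬ Decomp Op (a : ℕ) P}.ncard *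
        {P : List Block | IsPartition (n - (a : ℕ)) P}.ncard := by
    intro a
    calc Fintype.card ({P : List Block // IsPartition (a : ℕ) P ∧ ¬ Decomp Op (a : ℕ) P} ×
        {P : List Block // IsPartition (n - (a : ℕ)) P})
        = Nat.card ({P : List Block // IsPartition (a : ℕ) P ∧ ¬ Decomp Op (a : ℕ) P} ×
          {P : List Block // IsPartition (n - (a : ℕ)) P}) := Nat.card_eq_fintype_card.symm
      _ = Nat.card {P : List Block // IsPartition (a : ℕ) P ∧ ¬ Decomp Op (a : ℕ) P} *
          Nat.card {P : List Block // IsPartition (n - (a : ℕ)) P} := Nat.card_prod _ _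
      _ = _ := congrArg₂ (· * ·) (Nat.card_coe_set_eq _) (Nat.card_coe_set_eq _)
  calc {P : List Block | IsPartition n P}.ncard
      = Nat.card {P : List Block // IsPartition n P} := (Nat.card_coe_set_eq _).symm
    _ = Nat.card ((a : (Finset.Icc 1 n : Finset ℕ)) ×
        ({P : List Block // IsPartition (a : ℕ) P ∧ ¬ Decomp Op (a : ℕ) P} ×
          {P : List Block // IsPartition (n - (a : ℕ)) P})) := hcard.symm
    _ = Fintype.card ((a : (Finset.Icc 1 n : Finset ℕ)) ×
        ({P : List Block // IsPartition (a : ℕ) P ∧ ¬ Decomp Op (a : ℕ) P} ×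
          {P : List Block // IsPartition (n - (a : ℕ)) P})) := Nat.card_eq_fintype_card
    _ = ∑ a : (Finset.Icc 1 n : Finset ℕ),
        Fintype.card ({P : List Block // IsPartition (a : ℕ) P ∧ ¬ Decomp Op (a : ℕ) P} ×
          {P : List Block // IsPartition (n - (a : ℕ)) P}) := Fintype.card_sigma
    _ = ∑ a : (Finset.Icc 1 n : Finset ℕ),
        {P : List Block | IsPartition (a : ℕ) P ∧ ¬ Decomp Op (a : ℕ) P}.ncard *
          {P : List Block | IsPartition (n - (a : ℕ)) P}.ncard :=
        Finset.sum_congr rfl (fun a _ => e2 a)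
    _ = ∑ a ∈ Finset.Icc 1 n,
        {P : List Block | IsPartition a P ∧ ¬ Decomp Op a P}.ncard *
          {P : List Block | IsPartition (n - a) P}.ncard :=
        Finset.sum_coe_sort (Finset.Icc 1 n)
          (fun a => {P : List Block | IsPartition a P ∧ ¬ Decomp Op a P}.ncard *
            {P : List Block | IsPartition (n - a) P}.ncard)

end CardAux
/-- For every positive integer `n`, the number of atomic partitions
of `[n]` equals the number of unsplitable partitions of `[n]`. -/
theorem card_atomic_eq_card_unsplitable (n : ℕ) (hn : 0 < n) :
    {P : List Block | IsPartition n P ∧ Atomic n P}.ncard =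
      {P : List Block | IsPartition n P ∧ ¬ Splitable n P}.ncard := by
  have hA : ∀ m, {P : List Block | IsPartition m P ∧ Atomic m P} =
      {P : List Block | IsPartition m P ∧ ¬ CardAux.Decomp slash m P} := fun m => rfl
  have hU : ∀ m, {P : List Block | IsPartition m P ∧ ¬ Splitable m P} =
      {P : List Block | IsPartition m P ∧ ¬ CardAux.Decomp splitProd m P} := fun m => rfl
  have hslash := CardAux.rec_count slash
    (fun a σ => by simp [slash, shiftUp])
    (fun a b σ τ ha hb => CardAux.slash_part ha hb)
    (fun a b b' σ τ σ' τ' ha hb ha' hb' h => CardAux.slash_inj ha hb ha' hb' h)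
    (fun a b σ τ ρ => CardAux.slash_assoc a b σ τ ρ)
    (fun a a' b b' σ τ σ' τ' ha hb ha' hb' hlt _ h =>
      CardAux.slash_restrict ha hb ha' hb' hlt h)
  have hsplit := CardAux.rec_count splitProd
    (fun a σ => by rw [CardAux.splitProd_eq]; simp [shiftUp])
    (fun a b σ τ ha hb => CardAux.splitProd_part ha hb)
    (fun a b b' σ τ σ' τ' ha hb ha' hb' h => CardAux.splitProd_inj ha hb ha' hb' h)
    (fun a b σ τ ρ => CardAux.splitProd_assoc a b σ τ ρ)
    (fun a a' b b' σ τ σ' τ' ha hb ha' hb' hlt hsum h =>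
      CardAux.splitProd_restrict ha hb ha' hb' hlt hsum h)
  rw [hA, hU]
  suffices H : ∀ m, 0 < m →
      {P : List Block | IsPartition m P ∧ ¬ CardAux.Decomp slash m P}.ncard =
        {P : List Block | IsPartition m P ∧ ¬ CardAux.Decomp splitProd m P}.ncard by
    exact H n hn
  intro m
  induction m using Nat.strong_induction_on with
  | _ m ih =>
    intro hm
    have hsum := (hslash m hm).symm.trans (hsplit m hm)
    have hIcc : Finset.Icc 1 m = insert m (Finset.Icc 1 (m - 1)) := by
      ext x
      simp only [Finset.mem_Icc, Finset.mem_insert]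
      omega
    have hnotmem : m ∉ Finset.Icc 1 (m - 1) := by
      simp only [Finset.mem_Icc]
      omega
    rw [hIcc, Finset.sum_insert hnotmem, Finset.sum_insert hnotmem] at hsum
    have hcongr : ∑ a ∈ Finset.Icc 1 (m - 1),
        {P : List Block | IsPartition a P ∧ ¬ CardAux.Decomp slash a P}.ncard *
          {P : List Block | IsPartition (m - a) P}.ncard =
        ∑ a ∈ Finset.Icc 1 (m - 1),
        {P : List Block | IsPartition a P ∧ ¬ CardAux.Decomp splitProd a P}.ncard *
          {P : List Block | IsPartition (m - a) P}.ncard := by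
      refine Finset.sum_congr rfl (fun a haI => ?_)
      have hb := Finset.mem_Icc.1 haI
      rw [ih a (by omega) (by omega)]
    rw [hcongr] at hsum
    have hB0 : {P : List Block | IsPartition (m - m) P}.ncard = 1 := by
      rw [Nat.sub_self]
      have he : {P : List Block | IsPartition 0 P} = {([] : List Block)} := by
        ext P
        simp only [Set.mem_setOf_eq, Set.mem_singleton_iff]
        exact ⟨CardAux.part_zero, fun h => h ▸ CardAux.part_nil⟩
      rw [he, Set.ncard_singleton]
    rw [hB0, mul_one, mul_one] at hsum
    exact Nat.add_right_cancel hsum
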